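/- Let A and H be atoms such that the pair A, H is linear (no variable occurs more than once in the pair; in particular A and H are variable-disjoint and each of them is linear). If θ is a most general unifier of A and H, then the atom Aθ is linear. -/

import Mathlib

/-! # First-order terms, substitutions, unification -/

inductive Term (F : Type) (V : Type) : Type
  | var : V → Term F V
  | app : F → List (Term F V) → Term F V

namespace Term

variable {F V : Type}

/-- The variable `v` occurs in the term. -/
inductive VarIn (v : V) : Term F V → Prop
  | var : VarIn v (Term.var v)
  | app {f : F} {ts : List (Term F V)} {t : Term F V} :
      t ∈ ts → VarIn v t → VarIn v (Term.app f ts)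

/-- A term is ground if it contains no variables. -/
def Ground (t : Term F V) : Prop := ∀ v, ¬ VarIn v t

/-- Application of a substitution (a map from variables to terms) to a term. -/
def subst (σ : V → Term F V) : Term F V → Term F V
  | var x => σ x
  | app f ts => app f (ts.attach.map fun ⟨t, _⟩ => t.subst σ)

/-- Number of occurrences of the variable `v` in a term. -/
def count [DecidableEq V] (v : V) : Term F V → ℕ
  | var x => if x = v then 1 else 0
  | app _ ts => (ts.attach.map fun ⟨t, _⟩ => t.count v).sum

/-- A term (or atom) is linear if no variable occurs in it more than once. -/
def Linear [DecidableEq V] (t : Term F V) : Prop := ∀ v, count v t ≤ 1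

def IsVar : Term F V → Prop
  | var _ => True
  | app _ _ => False

end Term

/-- A substitution. -/
abbrev Subst (F V : Type) := V → Term F V

/-- Composition of substitutions: `(σ.comp η)` is `ση`. -/
def Subst.comp {F V : Type} (σ η : Subst F V) : Subst F V := fun v => (σ v).subst η

/-- The substitution `{X/t}`. -/
def subst1 {F V : Type} [DecidableEq V] (X : V) (t : Term F V) : Subst F V :=
  fun v => if v = X then t else Term.var v

variable {F V : Type}

/-- `σ` unifies the two terms (or atoms) `A` and `H`. -/
def IsUnifierPair (σ : Subst F V) (A H : Term F V) : Prop := A.subst σ = H.subst σ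

/-- `σ` is a most general unifier of `A` and `H`. -/
def IsMGUPair (σ : Subst F V) (A H : Term F V) : Prop :=
  IsUnifierPair σ A H ∧ ∀ τ, IsUnifierPair τ A H → ∃ η, τ = σ.comp η

/-- An equation between terms. -/
abbrev Eqn (F V : Type) := Term F V × Term F V

/-- A set of equations. -/
abbrev EqSet (F V : Type) := Set (Eqn F V)

def Eqn.subst (σ : Subst F V) (e : Eqn F V) : Eqn F V := (e.1.subst σ, e.2.subst σ)

/-- `σ` is a unifier of the equation set `E`. -/
def IsUnifier (σ : Subst F V) (E : EqSet F V) : Prop := ∀ e ∈ E, e.1.subst σ = e.2.subst σ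

def Unifiable (E : EqSet F V) : Prop := ∃ σ, IsUnifier σ E

/-- `σ` is a most general unifier of the equation set `E`. -/
def IsMGU (σ : Subst F V) (E : EqSet F V) : Prop :=
  IsUnifier σ E ∧ ∀ τ, IsUnifier τ E → ∃ η, τ = σ.comp η

/-! # The Martelli–Montanari algorithm (MMA) and its occur-check-less version MMA⁻ -/

/-- The variable `X` occurs in the equation `e`. -/
def occursInEqn (X : V) (e : Eqn F V) : Prop := Term.VarIn X e.1 ∨ Term.VarIn X e.2

/-- The variable `X` occurs in equations of `E` other than `e`. -/
def occursElsewhere (X : V) (e : Eqn F V) (E : EqSet F V) : Prop :=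
  ∃ e' ∈ E, e' ≠ e ∧ occursInEqn X e'

/-- Action (2) of MMA is applicable: `E` contains a clash `f(s₁,…,sₘ) = g(t₁,…,tₙ)`
(distinct function symbols; in a signature with arities, the same name with different
numbers of arguments also counts as distinct symbols). -/
def Clash (E : EqSet F V) : Prop :=
  ∃ f ss g ts, (Term.app f ss, Term.app g ts) ∈ E ∧ (f ≠ g ∨ ss.length ≠ ts.length)

/-- Action (6) of MMA (the occur-check failure) is applicable to `E`. -/
def OccApplicable (E : EqSet F V) : Prop :=
  ∃ X t, (Term.var X, t) ∈ E ∧ Term.var X ≠ t ∧ Term.VarIn X t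

/-- A (non-failing) step of MMA: actions (1), (3), (4), (5). -/
inductive MMAStep [DecidableEq V] : EqSet F V → EqSet F V → Prop
  | decomp {E : EqSet F V} {f : F} {ss ts : List (Term F V)} :
      (Term.app f ss, Term.app f ts) ∈ E → ss.length = ts.length →
      MMAStep E ((E \ {(Term.app f ss, Term.app f ts)}) ∪ {e | e ∈ ss.zip ts})
  | del {E : EqSet F V} {X : V} : (Term.var X, Term.var X) ∈ E →
      MMAStep E (E \ {(Term.var X, Term.var X)})
  | orient {E : EqSet F V} {X : V} {t : Term F V} : (t, Term.var X) ∈ E → ¬ t.IsVar →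
      MMAStep E ((E \ {(t, Term.var X)}) ∪ {(Term.var X, t)})
  | elim {E : EqSet F V} {X : V} {t : Term F V} :
      (Term.var X, t) ∈ E → Term.var X ≠ t → ¬ Term.VarIn X t →
      occursElsewhere X (Term.var X, t) E →
      MMAStep E (insert (Term.var X, t) (Eqn.subst (subst1 X t) '' (E \ {(Term.var X, t)})))

/-- `E'` is reachable from `E` by (non-failing) MMA steps. -/
def MMAReach [DecidableEq V] (E E' : EqSet F V) : Prop := Relation.ReflTransGen MMAStep E E'

/-- `E` is not subject to occur-check: no run of MMA on `E` performs action (6),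
i.e. action (6) is not applicable to any equation set reachable by MMA from `E`. -/
def NSTO [DecidableEq V] (E : EqSet F V) : Prop :=
  ∀ E', MMAReach E E' → ¬ OccApplicable E'

/-- A solved equation set: `X₁=t₁, …, Xₙ=tₙ` with `X₁,…,Xₙ` distinct variables
none of which occurs in any `tᵢ`. -/
def SolvedSet (E : EqSet F V) : Prop :=
  (∀ e ∈ E, ∃ X, e.1 = Term.var X) ∧
  (∀ e ∈ E, ∀ e' ∈ E, e.1 = e'.1 → e = e') ∧
  (∀ e ∈ E, ∀ e' ∈ E, ∀ X, e.1 = Term.var X → ¬ Term.VarIn X e'.2)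

/-- The relation `X ≻_E Y`: for some equation `X = t` of `E`, `Y ∈ Var(t)`. -/
def succRel (E : EqSet F V) (X Y : V) : Prop := ∃ t, (Term.var X, t) ∈ E ∧ Term.VarIn Y t

/-- A semi-solved equation set: `X₁=t₁, …, Xₙ=tₙ` with `X₁,…,Xₙ` distinct variables,
no `tᵢ` equal to `Xᵢ`, and whenever `Xᵢ` occurs in some `tₖ` then `Xᵢ ≻⁺_E Xᵢ`. -/
def SemiSolved (E : EqSet F V) : Prop :=
  (∀ e ∈ E, ∃ X, e.1 = Term.var X) ∧
  (∀ e ∈ E, ∀ e' ∈ E, e.1 = e'.1 → e = e') ∧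
  (∀ e ∈ E, e.1 ≠ e.2) ∧
  (∀ X, (∃ e' ∈ E, Term.VarIn X e'.2) → (∃ t, (Term.var X, t) ∈ E) →
    Relation.TransGen (succRel E) X X)

/-- `σ` is the substitution represented by the (solved) equation set `E`. -/
def Represents (E : EqSet F V) (σ : Subst F V) : Prop :=
  ∀ v, (∃ t, (Term.var v, t) ∈ E ∧ σ v = t) ∨ ((∀ t, (Term.var v, t) ∉ E) ∧ σ v = Term.var v)

/-- There is an occur-check free run of MMA on `E`: a maximal run never performing
action (6), hence ending either by action (2) (failure on a clash) or with success
(no action applicable any more, the final set being solved). (MMA always terminates,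
so runs are finite.) -/
def ExistsOCFreeRun [DecidableEq V] (E : EqSet F V) : Prop :=
  ∃ E', MMAReach E E' ∧ (Clash E' ∨ SolvedSet E')

/-- `u` is obtained from `s` by replacing *some* of the occurrences of the variable `X`
by the term `t`. -/
inductive ReplSome [DecidableEq V] (X : V) (t : Term F V) : Term F V → Term F V → Prop
  | keep (v : V) : ReplSome X t (Term.var v) (Term.var v)
  | repl : ReplSome X t (Term.var X) t
  | app {f : F} {ss ts : List (Term F V)} :
      List.Forall₂ (ReplSome X t) ss ts → ReplSome X t (Term.app f ss) (Term.app f ts)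

def ReplSomeEqn [DecidableEq V] (X : V) (t : Term F V) (e e' : Eqn F V) : Prop :=
  ReplSome X t e.1 e'.1 ∧ ReplSome X t e.2 e'.2

/-- The labels of the actions of MMA⁻. -/
inductive MLabel (F V : Type) where
  | decomp | del | orient
  | elim (X : V) (t : Term F V)
  | elim' (X : V) (t : Term F V)

/-- A configuration of MMA⁻: the current equation set together with the set of
variables on which action (5) has already been performed. -/
abbrev MState (F V : Type) := EqSet F V × Set V

/-- A (non-failing) step of MMA⁻, labelled by the action used: actions (1), (3), (4),
(5) (with condition `X ≠ t` instead of the occur-check `X ∉ Var(t)`), and (5')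
(replacing some occurrences of `X` by `t` in the other equations, allowed only if
action (5) has previously been performed on an equation with left-hand side `X`). -/
inductive MMStepL [DecidableEq V] : MLabel F V → MState F V → MState F V → Prop
  | decomp {E : EqSet F V} {H : Set V} {f : F} {ss ts : List (Term F V)} :
      (Term.app f ss, Term.app f ts) ∈ E → ss.length = ts.length →
      MMStepL MLabel.decomp (E, H)
        ((E \ {(Term.app f ss, Term.app f ts)}) ∪ {e | e ∈ ss.zip ts}, H)
  | del {E : EqSet F V} {H : Set V} {X : V} : (Term.var X, Term.var X) ∈ E →
      MMStepL MLabel.del (E, H) (E \ {(Term.var X, Term.var X)}, H)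
  | orient {E : EqSet F V} {H : Set V} {X : V} {t : Term F V} :
      (t, Term.var X) ∈ E → ¬ t.IsVar →
      MMStepL MLabel.orient (E, H) ((E \ {(t, Term.var X)}) ∪ {(Term.var X, t)}, H)
  | elim {E : EqSet F V} {H : Set V} {X : V} {t : Term F V} :
      (Term.var X, t) ∈ E → Term.var X ≠ t →
      occursElsewhere X (Term.var X, t) E →
      MMStepL (MLabel.elim X t) (E, H)
        (insert (Term.var X, t) (Eqn.subst (subst1 X t) '' (E \ {(Term.var X, t)})),
         insert X H)
  | elim' {E : EqSet F V} {H : Set V} {X : V} {t : Term F V} {g : Eqn F V → Eqn F V} :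
      (Term.var X, t) ∈ E → Term.var X ≠ t →
      occursElsewhere X (Term.var X, t) E → X ∈ H →
      (∀ e ∈ E \ {(Term.var X, t)}, ReplSomeEqn X t e (g e)) →
      MMStepL (MLabel.elim' X t) (E, H)
        (insert (Term.var X, t) (g '' (E \ {(Term.var X, t)})), H)

/-- A (non-failing) step of MMA⁻. -/
def MMStep [DecidableEq V] (s s' : MState F V) : Prop := ∃ l, MMStepL l s s'

/-- Reachability by (non-failing) steps of MMA⁻. A run of MMA⁻ on an equation set `E`
starts in the configuration `(E, ∅)`; it terminates with failure when action (2) is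
performed (a clash is present), and it may terminate with success when the current
equation set is semi-solved. -/
def MMReach [DecidableEq V] (s s' : MState F V) : Prop := Relation.ReflTransGen MMStep s s'


/-! ## Auxiliary lemmas -/

theorem list_map_eq_self {α : Type*} {f : α → α} {l : List α} (h : l.map f = l) :
    ∀ x ∈ l, f x = x := by
  induction l with
  | nil => simp
  | cons a l ih =>
    simp only [List.map_cons, List.cons.injEq] at h
    intro x hx
    rcases List.mem_cons.mp hx with rfl | hx
    · exact h.1
    · exact ih h.2 x hx

namespace Term

variable {F V : Type}

theorem ind' {P : Term F V → Prop}
    (hvar : ∀ x, P (Term.var x))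
    (happ : ∀ f ts, (∀ t ∈ ts, P t) → P (Term.app f ts)) : ∀ t, P t
  | .var x => hvar x
  | .app f ts => happ f ts (fun t ht => ind' hvar happ t)
termination_by t => sizeOf t
decreasing_by
  simp only [Term.app.sizeOf_spec]
  have := List.sizeOf_lt_of_mem ht
  omega

@[simp] theorem subst_var (σ : Subst F V) (x : V) :
    (Term.var x).subst σ = σ x := by simp [Term.subst]

@[simp] theorem subst_app (σ : Subst F V) (f : F) (ts : List (Term F V)) :
    (Term.app f ts).subst σ = Term.app f (ts.map (·.subst σ)) := by
  simp [Term.subst, List.map_attach_eq_pmap]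

theorem varIn_app_iff {v : V} {f : F} {ts : List (Term F V)} :
    VarIn v (Term.app f ts) ↔ ∃ t ∈ ts, VarIn v t := by
  constructor
  · intro h; cases h; exact ⟨_, ‹_›, ‹_›⟩
  · rintro ⟨t, ht, hv⟩; exact VarIn.app ht hv

theorem subst_congr {σ σ' : Subst F V} {t : Term F V}
    (h : ∀ v, VarIn v t → σ v = σ' v) : t.subst σ = t.subst σ' := by
  induction t using ind' with
  | hvar x => simpa using h x VarIn.var
  | happ f ts ih =>
    simp only [subst_app, Term.app.injEq, true_and]
    apply List.map_congr_left
    intro t ht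
    exact ih t ht (fun v hv => h v (VarIn.app ht hv))

theorem subst_id {σ : Subst F V} {t : Term F V}
    (h : ∀ v, VarIn v t → σ v = Term.var v) : t.subst σ = t := by
  induction t using ind' with
  | hvar x => simpa using h x VarIn.var
  | happ f ts ih =>
    simp only [subst_app, Term.app.injEq, true_and]
    conv_rhs => rw [← List.map_id ts]
    apply List.map_congr_left
    intro t ht
    exact ih t ht (fun v hv => h v (VarIn.app ht hv))

theorem subst_subst (σ η : Subst F V) (t : Term F V) :
    (t.subst σ).subst η = t.subst (fun v => (σ v).subst η) := by
  induction t using ind' with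
  | hvar x => simp
  | happ f ts ih =>
    simp only [subst_app, List.map_map]
    congr 1
    apply List.map_congr_left
    intro t ht
    exact ih t ht

theorem varIn_subst {w : V} {σ : Subst F V} {t : Term F V} :
    VarIn w (t.subst σ) ↔ ∃ v, VarIn v t ∧ VarIn w (σ v) := by
  induction t using ind' with
  | hvar x =>
    simp only [subst_var]
    constructor
    · intro h; exact ⟨x, VarIn.var, h⟩
    · rintro ⟨v, hv, hw⟩; cases hv; exact hw
  | happ f ts ih =>
    rw [subst_app, varIn_app_iff]
    constructor
    · rintro ⟨s, hs, hw⟩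
      rw [List.mem_map] at hs
      obtain ⟨t, ht, rfl⟩ := hs
      obtain ⟨v, hv, hw⟩ := (ih t ht).1 hw
      exact ⟨v, VarIn.app ht hv, hw⟩
    · rintro ⟨v, hv, hw⟩
      rw [varIn_app_iff] at hv
      obtain ⟨t, ht, hv⟩ := hv
      exact ⟨t.subst σ, List.mem_map_of_mem ht, (ih t ht).2 ⟨v, hv, hw⟩⟩

theorem subst_eq_self {σ : Subst F V} {t : Term F V} (h : t.subst σ = t) :
    ∀ v, VarIn v t → σ v = Term.var v := by
  induction t using ind' with
  | hvar x =>
    intro v hv; cases hv; simpa using h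
  | happ f ts ih =>
    intro v hv
    rw [varIn_app_iff] at hv
    obtain ⟨t, ht, hv⟩ := hv
    simp only [subst_app, Term.app.injEq, true_and] at h
    exact ih t ht (list_map_eq_self h t ht) v hv

variable [DecidableEq V]

@[simp] theorem count_var (v x : V) :
    count v (Term.var x : Term F V) = if x = v then 1 else 0 := by simp [Term.count]

@[simp] theorem count_app (v : V) (f : F) (ts : List (Term F V)) :
    count v (Term.app f ts) = (ts.map (count v)).sum := by
  simp [Term.count, List.map_attach_eq_pmap]

theorem count_pos_iff {v : V} {t : Term F V} : 0 < count v t ↔ VarIn v t := by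
  induction t using ind' with
  | hvar x =>
    simp only [count_var]
    constructor
    · intro h; split at h
      · subst ‹x = v›; exact VarIn.var
      · omega
    · intro h; cases h; simp
  | happ f ts ih =>
    simp only [count_app]
    constructor
    · intro h
      have : ∃ t ∈ ts, 0 < count v t := by
        by_contra hc
        push_neg at hc
        have : (ts.map (count v)).sum = 0 := by
          apply List.sum_eq_zero
          intro x hx
          simp only [List.mem_map] at hx
          obtain ⟨t, ht, rfl⟩ := hx
          exact Nat.le_zero.mp (hc t ht)
        omega
      obtain ⟨t, ht, hpos⟩ := this
      exact VarIn.app ht ((ih t ht).1 hpos)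
    · intro h
      obtain ⟨t, ht, hv⟩ : ∃ t ∈ ts, VarIn v t := varIn_app_iff.1 h
      calc 0 < count v t := (ih t ht).2 hv
        _ ≤ (ts.map (count v)).sum := List.single_le_sum (by simp) _ (List.mem_map_of_mem ht)

/-- If `σ` maps each variable of `t` to a variable, and `w₀` is the only candidate
variable of `t` mapped to `var v`, then `count v (t.subst σ) ≤ Term.count w₀ t`. -/
theorem count_subst_le {σ : Subst F V} {t : Term F V} {v w₀ : V}
    (hvar : ∀ w, VarIn w t → ∃ u, σ w = Term.var u)
    (huniq : ∀ w, VarIn w t → σ w = Term.var v → w = w₀) :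
    count v (t.subst σ) ≤ Term.count w₀ t := by
  induction t using ind' with
  | hvar x =>
    obtain ⟨u, hu⟩ := hvar x VarIn.var
    simp only [subst_var, hu, count_var]
    by_cases huv : u = v
    · subst huv
      have : x = w₀ := huniq x VarIn.var hu
      simp [this]
    · simp [huv]
  | happ f ts ih =>
    simp only [subst_app, count_app, List.map_map]
    apply List.sum_le_sum
    intro t ht
    simp only [Function.comp_apply]
    exact ih t ht (fun w hw => hvar w (VarIn.app ht hw))
      (fun w hw h => huniq w (VarIn.app ht hw) h)

end Term

theorem list_sum_pos_exists {l : List ℕ} (h : 0 < l.sum) : ∃ x ∈ l, 0 < x := by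
  by_contra hc
  push_neg at hc
  have : l.sum = 0 := List.sum_eq_zero (fun x hx => Nat.le_zero.mp (hc x hx))
  omega

open Term in
mutual

/-- Existence of a "linearizing" unifier for a linear, variable-disjoint pair. -/
theorem exists_lin_unifier {F V : Type} [DecidableEq V] (τ : Subst F V)
    (A H : Term F V) (hu : A.subst τ = H.subst τ)
    (hlin : ∀ v, count v A + count v H ≤ 1) :
    ∃ θ₀ : Subst F V,
      A.subst θ₀ = H.subst θ₀ ∧
      (∀ v, count v (A.subst θ₀) ≤ 1) ∧
      (∀ σ : Subst F V, A.subst σ = H.subst σ → ∀ v, (θ₀ v).subst σ = σ v) ∧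
      (∀ v, ¬ VarIn v A → ¬ VarIn v H → θ₀ v = Term.var v) ∧
      (∀ v w, VarIn w (θ₀ v) → w = v ∨ VarIn w A ∨ VarIn w H) := by
  match A, H with
  | .var x, H =>
    have hx : ¬ VarIn x H := by
      intro hc
      have h1 := hlin x
      have h2 := count_pos_iff.2 hc
      rw [show count x (Term.var x : Term F V) = 1 by simp] at h1
      omega
    refine ⟨subst1 x H, ?_, ?_, ?_, ?_, ?_⟩
    · have h1 : (Term.var x).subst (subst1 x H) = H := by simp [subst1]
      have h2 : H.subst (subst1 x H) = H := by
        apply subst_id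
        intro v hv
        have : v ≠ x := fun h => hx (h ▸ hv)
        simp [subst1, this]
      rw [h1, h2]
    · intro v
      have h1 : (Term.var x).subst (subst1 x H) = H := by simp [subst1]
      rw [h1]
      have := hlin v
      omega
    · intro σ hσ v
      simp only [subst_var] at hσ
      by_cases hvx : v = x
      · subst hvx; simp [subst1, ← hσ]
      · simp [subst1, hvx]
    · intro v hvA _
      have : v ≠ x := by intro h; exact hvA (h ▸ VarIn.var)
      simp [subst1, this]
    · intro v w hw
      by_cases hvx : v = x
      · subst hvx; right; right; simpa [subst1] using hw
      · left
        have he : subst1 x H v = Term.var v := by simp [subst1, hvx]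
        rw [he] at hw
        cases hw; rfl
  | .app f ss, .var z =>
    have hz : ¬ VarIn z (Term.app f ss) := by
      intro hc
      have h1 := hlin z
      have h2 := count_pos_iff.2 hc
      rw [show count z (Term.var z : Term F V) = 1 by simp] at h1
      omega
    have hid : (Term.app f ss).subst (subst1 z (Term.app f ss)) = Term.app f ss := by
      apply subst_id
      intro v hv
      have : v ≠ z := fun h => hz (h ▸ hv)
      simp [subst1, this]
    refine ⟨subst1 z (Term.app f ss), ?_, ?_, ?_, ?_, ?_⟩
    · rw [hid]; simp [subst1]
    · intro v
      rw [hid]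
      have := hlin v
      omega
    · intro σ hσ v
      simp only [subst_var] at hσ
      by_cases hvz : v = z
      · subst hvz; simp [subst1, hσ]
      · simp [subst1, hvz]
    · intro v _ hvH
      have : v ≠ z := by intro h; exact hvH (h ▸ VarIn.var)
      simp [subst1, this]
    · intro v w hw
      by_cases hvz : v = z
      · subst hvz; right; left; simpa [subst1] using hw
      · left
        have he : subst1 z (Term.app f ss) v = Term.var v := by simp [subst1, hvz]
        rw [he] at hw
        cases hw; rfl
  | .app f ss, .app g ts =>
    simp only [subst_app, Term.app.injEq] at hu
    obtain ⟨rfl, hu⟩ := hu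
    have hlin' : ∀ v, (ss.map (count v)).sum + (ts.map (count v)).sum ≤ 1 := by
      intro v; have := hlin v; simpa [count_app] using this
    obtain ⟨θ₀, h1, h2, h3, h4, h5⟩ := exists_lin_unifier_list τ ss ts hu hlin'
    refine ⟨θ₀, ?_, ?_, ?_, ?_, ?_⟩
    · simp only [subst_app, Term.app.injEq, true_and]; exact h1
    · intro v
      simpa [subst_app, count_app, List.map_map, Function.comp_def] using h2 v
    · intro σ hσ v
      simp only [subst_app, Term.app.injEq] at hσ
      exact h3 σ hσ.2 v
    · intro v hvA hvH
      rw [varIn_app_iff] at hvA hvH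
      push_neg at hvA hvH
      exact h4 v hvA hvH
    · intro v w hw
      rcases h5 v w hw with h | h | h
      · exact Or.inl h
      · exact Or.inr (Or.inl (varIn_app_iff.2 h))
      · exact Or.inr (Or.inr (varIn_app_iff.2 h))
termination_by sizeOf A
decreasing_by simp only [Term.app.sizeOf_spec, List.cons.sizeOf_spec]; omega

theorem exists_lin_unifier_list {F V : Type} [DecidableEq V] (τ : Subst F V)
    (ss ts : List (Term F V)) (hu : ss.map (·.subst τ) = ts.map (·.subst τ))
    (hlin : ∀ v, (ss.map (count v)).sum + (ts.map (count v)).sum ≤ 1) :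
    ∃ θ₀ : Subst F V,
      ss.map (·.subst θ₀) = ts.map (·.subst θ₀) ∧
      (∀ v, (ss.map (fun s => count v (s.subst θ₀))).sum ≤ 1) ∧
      (∀ σ : Subst F V, ss.map (·.subst σ) = ts.map (·.subst σ) →
        ∀ v, (θ₀ v).subst σ = σ v) ∧
      (∀ v, (∀ s ∈ ss, ¬ VarIn v s) → (∀ t ∈ ts, ¬ VarIn v t) → θ₀ v = Term.var v) ∧
      (∀ v w, VarIn w (θ₀ v) → w = v ∨ (∃ s ∈ ss, VarIn w s) ∨ (∃ t ∈ ts, VarIn w t)) := by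
  match ss, ts with
  | [], [] =>
    refine ⟨Term.var, by simp, by simp, ?_, fun v _ _ => rfl, ?_⟩
    · intro σ _ v; simp
    · intro v w hw; cases hw; exact Or.inl rfl
  | [], t :: ts => simp at hu
  | s :: ss, [] => simp at hu
  | s :: ss, t :: ts =>
    simp only [List.map_cons, List.cons.injEq] at hu
    obtain ⟨hsτ, huτ⟩ := hu
    have hlinh : ∀ v, count v s + count v t ≤ 1 := by
      intro v; have := hlin v; simp only [List.map_cons, List.sum_cons] at this; omega
    have hlinr : ∀ v, (ss.map (count v)).sum + (ts.map (count v)).sum ≤ 1 := by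
      intro v; have := hlin v; simp only [List.map_cons, List.sum_cons] at this; omega
    obtain ⟨θh, ih1, ih2, ih3, ih4, ih5⟩ := exists_lin_unifier τ s t hsτ hlinh
    obtain ⟨θr, ir1, ir2, ir3, ir4, ir5⟩ := exists_lin_unifier_list τ ss ts huτ hlinr
    set θ₀ : Subst F V := fun v => if 0 < count v s + count v t then θh v else θr v with hθ₀
    have hh : ∀ v, VarIn v s ∨ VarIn v t → θ₀ v = θh v := by
      intro v hv
      have hc : 0 < count v s + count v t := by
        rcases hv with h | h
        · have := count_pos_iff.2 h; omega
        · have := count_pos_iff.2 h; omega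
      simp only [hθ₀, if_pos hc]
    have hrr : ∀ v, count v s + count v t = 0 → θ₀ v = θr v := by
      intro v hv
      simp only [hθ₀]
      rw [if_neg (by omega)]
    have htail : ∀ v, ((∃ u ∈ ss, VarIn v u) ∨ (∃ u ∈ ts, VarIn v u)) →
        count v s + count v t = 0 := by
      intro v hv
      have hx := hlin v
      simp only [List.map_cons, List.sum_cons] at hx
      rcases hv with ⟨u, hu, h⟩ | ⟨u, hu, h⟩
      · have h1 := count_pos_iff.2 h
        have h2 : count v u ≤ (ss.map (count v)).sum :=
          List.single_le_sum (by simp) _ (List.mem_map_of_mem hu)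
        omega
      · have h1 := count_pos_iff.2 h
        have h2 : count v u ≤ (ts.map (count v)).sum :=
          List.single_le_sum (by simp) _ (List.mem_map_of_mem hu)
        omega
    have e1 : s.subst θ₀ = s.subst θh := subst_congr (fun v hv => hh v (Or.inl hv))
    have e2 : t.subst θ₀ = t.subst θh := subst_congr (fun v hv => hh v (Or.inr hv))
    have e3 : ∀ u ∈ ss, u.subst θ₀ = u.subst θr := by
      intro u hu
      exact subst_congr (fun v hv => hrr v (htail v (Or.inl ⟨u, hu, hv⟩)))
    have e4 : ∀ u ∈ ts, u.subst θ₀ = u.subst θr := by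
      intro u hu
      exact subst_congr (fun v hv => hrr v (htail v (Or.inr ⟨u, hu, hv⟩)))
    refine ⟨θ₀, ?_, ?_, ?_, ?_, ?_⟩
    · simp only [List.map_cons, List.cons.injEq]
      constructor
      · rw [e1, e2]; exact ih1
      · rw [List.map_congr_left e3, List.map_congr_left e4]; exact ir1
    · intro v
      simp only [List.map_cons, List.sum_cons]
      rw [e1, List.map_congr_left (fun u hu => by rw [e3 u hu] :
        ∀ u ∈ ss, count v (u.subst θ₀) = count v (u.subst θr))]
      have ha1 : count v (s.subst θh) ≤ 1 := ih2 v
      have hb1 : (ss.map (fun u => count v (u.subst θr))).sum ≤ 1 := ir2 v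
      by_cases ha : 0 < count v (s.subst θh)
      · have hvs : 0 < count v s + count v t := by
          have hv : VarIn v (s.subst θh) := count_pos_iff.1 ha
          obtain ⟨w, hws, hvw⟩ := varIn_subst.1 hv
          rcases ih5 w v hvw with rfl | h | h
          · have := count_pos_iff.2 hws; omega
          · have := count_pos_iff.2 h; omega
          · have := count_pos_iff.2 h; omega
        have hb0 : (ss.map (fun u => count v (u.subst θr))).sum = 0 := by
          by_contra hb
          obtain ⟨x, hx, hxpos⟩ := list_sum_pos_exists (Nat.pos_of_ne_zero hb)
          rw [List.mem_map] at hx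
          obtain ⟨u, hu, rfl⟩ := hx
          have hv : VarIn v (u.subst θr) := count_pos_iff.1 hxpos
          obtain ⟨w, hwu, hvw⟩ := varIn_subst.1 hv
          have hmem : (∃ u' ∈ ss, VarIn v u') ∨ (∃ u' ∈ ts, VarIn v u') := by
            rcases ir5 w v hvw with rfl | h | h
            · exact Or.inl ⟨u, hu, hwu⟩
            · exact Or.inl h
            · exact Or.inr h
          have := htail v hmem
          omega
        omega
      · omega
    · intro σ hσ v
      simp only [List.map_cons, List.cons.injEq] at hσ
      obtain ⟨hσh, hσr⟩ := hσ
      by_cases hc : 0 < count v s + count v t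
      · rw [show θ₀ v = θh v from by simp only [hθ₀, if_pos hc]]
        exact ih3 σ hσh v
      · rw [show θ₀ v = θr v from by simp only [hθ₀]; rw [if_neg hc]]
        exact ir3 σ hσr v
    · intro v hs ht
      by_cases hc : 0 < count v s + count v t
      · rw [show θ₀ v = θh v from by simp only [hθ₀, if_pos hc]]
        exact ih4 v (hs s (List.mem_cons_self)) (ht t (List.mem_cons_self))
      · rw [show θ₀ v = θr v from by simp only [hθ₀]; rw [if_neg hc]]
        exact ir4 v (fun u hu => hs u (List.mem_cons_of_mem _ hu))
          (fun u hu => ht u (List.mem_cons_of_mem _ hu))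
    · intro v w hw
      by_cases hc : 0 < count v s + count v t
      · rw [show θ₀ v = θh v from by simp only [hθ₀, if_pos hc]] at hw
        rcases ih5 v w hw with h | h | h
        · exact Or.inl h
        · exact Or.inr (Or.inl ⟨s, List.mem_cons_self, h⟩)
        · exact Or.inr (Or.inr ⟨t, List.mem_cons_self, h⟩)
      · rw [show θ₀ v = θr v from by simp only [hθ₀]; rw [if_neg hc]] at hw
        rcases ir5 v w hw with h | ⟨u, hu, h⟩ | ⟨u, hu, h⟩
        · exact Or.inl h
        · exact Or.inr (Or.inl ⟨u, List.mem_cons_of_mem _ hu, h⟩)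
        · exact Or.inr (Or.inr ⟨u, List.mem_cons_of_mem _ hu, h⟩)
termination_by sizeOf ss
decreasing_by all_goals (simp only [Term.app.sizeOf_spec, List.cons.sizeOf_spec]; omega)

end

theorem stmt1' {F V : Type} [DecidableEq V] (A H : Term F V) (θ : Subst F V)
    (hlin : ∀ v, Term.count v A + Term.count v H ≤ 1)
    (hmgu : IsMGUPair θ A H) :
    (A.subst θ).Linear := by
  obtain ⟨huni, hfac⟩ := hmgu
  obtain ⟨θ₀, h1, h2, h3, h4, h5⟩ := exists_lin_unifier θ A H huni hlin
  obtain ⟨η, hη⟩ := hfac θ₀ h1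
  have hθ : ∀ v, (θ₀ v).subst θ = θ v := h3 θ huni
  have hAθ : A.subst θ = (A.subst θ₀).subst θ := by
    rw [Term.subst_subst]
    exact Term.subst_congr (fun v _ => (hθ v).symm)
  have hAθ₀ : A.subst θ₀ = (A.subst θ).subst η := by
    rw [hη, Term.subst_subst]; rfl
  have hfix : (A.subst θ₀).subst (fun v => (θ v).subst η) = A.subst θ₀ := by
    calc (A.subst θ₀).subst (fun v => (θ v).subst η)
        = ((A.subst θ₀).subst θ).subst η := (Term.subst_subst _ _ _).symm
      _ = (A.subst θ).subst η := by rw [← hAθ]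
      _ = A.subst θ₀ := hAθ₀.symm
  have hkey : ∀ v, Term.VarIn v (A.subst θ₀) → (θ v).subst η = Term.var v :=
    Term.subst_eq_self hfix
  have hvar : ∀ w, Term.VarIn w (A.subst θ₀) → ∃ u, θ w = Term.var u := by
    intro w hw
    have hk := hkey w hw
    cases hθw : θ w with
    | var u => exact ⟨u, rfl⟩
    | app f ts =>
      rw [hθw] at hk
      simp only [Term.subst_app] at hk
      exact absurd hk (by simp)
  intro v
  rw [hAθ]
  by_cases hex : ∃ w, Term.VarIn w (A.subst θ₀) ∧ θ w = Term.var v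
  · obtain ⟨w₀, hw₀1, hw₀2⟩ := hex
    have huniq : ∀ w, Term.VarIn w (A.subst θ₀) → θ w = Term.var v → w = w₀ := by
      intro w hw hwv
      have e1 := hkey w hw
      have e2 := hkey w₀ hw₀1
      rw [hwv] at e1
      rw [hw₀2] at e2
      simp only [Term.subst_var] at e1 e2
      rw [e1] at e2
      exact (Term.var.injEq _ _).mp e2
    calc Term.count v ((A.subst θ₀).subst θ) ≤ Term.count w₀ (A.subst θ₀) :=
          Term.count_subst_le hvar huniq
      _ ≤ 1 := h2 w₀
  · push_neg at hex
    have huniq : ∀ w, Term.VarIn w (A.subst θ₀) → θ w = Term.var v → w = v :=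
      fun w hw hv => absurd hv (hex w hw)
    calc Term.count v ((A.subst θ₀).subst θ) ≤ Term.count v (A.subst θ₀) :=
          Term.count_subst_le hvar huniq
      _ ≤ 1 := h2 v
/-- If the pair of atoms `A`, `H` is linear (no variable occurs more
than once in the pair) and `θ` is an mgu of `A` and `H`, then `Aθ` is linear. -/
theorem stmt1 {F V : Type} [DecidableEq V] (A H : Term F V) (θ : Subst F V)
    (hlin : ∀ v, Term.count v A + Term.count v H ≤ 1)
    (hmgu : IsMGUPair θ A H) :
    (A.subst θ).Linear := stmt1' A H θ hlin hmgu
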